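/- There exists ε ∈ (0, 1) such that for all real M > 0 and Q with |Q| ≤ εM, and for every r with r₊(M,Q) ≤ r ≤ r_P(M,Q), one has 6r⁴ − 21Mr³ + (8M² + 8Q²)r² + 5MQ²r − 6Q⁴ ≤ 0. Equivalently, on that interval 2(r² − 3Mr + 2Q²)/r⁵ − (1/2)·d/dr( Υ(r)·V₂(r) ) ≤ 0. -/

import Mathlib

noncomputable section

/-- The Reissner–Nordström lapse function `Υ(r) = 1 - 2M/r + Q²/r²`. -/
def Upsilon (M Q r : ℝ) : ℝ := 1 - 2*M/r + Q^2/r^2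

/-- The event horizon radius `r₊ = M + √(M² - Q²)`. -/
def rplus (M Q : ℝ) : ℝ := M + Real.sqrt (M^2 - Q^2)

/-- The photon-sphere radius `r_P = (3M + √(9M² - 8Q²))/2`. -/
def rP (M Q : ℝ) : ℝ := (3*M + Real.sqrt (9*M^2 - 8*Q^2)) / 2

/-- The Regge–Wheeler potential `V₂(r) = r⁻²(4 - 2M/r - 2Q²/r²)`. -/
def V2 (M Q r : ℝ) : ℝ := (1 / r^2) * (4 - 2*M/r - 2*Q^2/r^2)

set_option maxHeartbeats 1000000 in
theorem quartic_V2_nonpos_small_charge :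
    ∃ ε : ℝ, 0 < ε ∧ ε < 1 ∧
      ∀ M Q : ℝ, 0 < M → |Q| ≤ ε * M →
        ∀ r : ℝ, rplus M Q ≤ r → r ≤ rP M Q →
          (6*r^4 - 21*M*r^3 + (8*M^2 + 8*Q^2)*r^2 + 5*M*Q^2*r - 6*Q^4 ≤ 0) ∧
          (2*(r^2 - 3*M*r + 2*Q^2) / r^5
            - (1/2) * deriv (fun s => Upsilon M Q s * V2 M Q s) r ≤ 0) := by
  refine ⟨1/10, by norm_num, by norm_num, ?_⟩
  intro M Q hM hQ r hr1 hr2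
  have hQ2 : Q^2 ≤ M^2/100 := by
    have h1 : |Q| ≤ M/10 := by linarith
    have h2 : Q^2 = |Q|^2 := (sq_abs Q).symm
    nlinarith [abs_nonneg Q]
  have hs0 : 0 ≤ Real.sqrt (M^2 - Q^2) := Real.sqrt_nonneg _
  have hs2 : (Real.sqrt (M^2 - Q^2))^2 = M^2 - Q^2 :=
    Real.sq_sqrt (by nlinarith)
  have ht0 : 0 ≤ Real.sqrt (9*M^2 - 8*Q^2) := Real.sqrt_nonneg _
  have ht2 : (Real.sqrt (9*M^2 - 8*Q^2))^2 = 9*M^2 - 8*Q^2 :=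
    Real.sq_sqrt (by nlinarith)
  set s := Real.sqrt (M^2 - Q^2)
  set t := Real.sqrt (9*M^2 - 8*Q^2)
  have hrlb : M + s ≤ r := hr1
  have hrub : 2*r ≤ 3*M + t := by
    have : r ≤ (3*M + t)/2 := hr2
    linarith
  have hsge : 99/100 * M ≤ s := by nlinarith
  have htle : t ≤ 3*M := by nlinarith
  have hr2M : 199/100 * M ≤ r := by linarith
  have hr3M : r ≤ 3*M := by linarith
  have hr0 : 0 < r := by linarith
  have hP : 6*r^4 - 21*M*r^3 + (8*M^2 + 8*Q^2)*r^2 + 5*M*Q^2*r - 6*Q^4 ≤ 0 := by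
    have hF1 : 0 ≤ 3*r^2*((2*r - M)*(3*M - r)) := by
      have : (0:ℝ) ≤ (2*r - M)*(3*M - r) :=
        mul_nonneg (by linarith) (by linarith)
      positivity
    have hF2 : 0 ≤ (M^2/100 - Q^2)*r^2 :=
      mul_nonneg (by linarith) (sq_nonneg r)
    have hF3 : Q^2*r ≤ (M^2/100)*(3*M) :=
      mul_le_mul hQ2 hr3M hr0.le (by positivity)
    have hF3' : M*(Q^2*r) ≤ M*((M^2/100)*(3*M)) :=
      mul_le_mul_of_nonneg_left hF3 hM.le
    have hrr : (199/100*M)^2 ≤ r^2 := by nlinarith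
    have hF4 : M^2*((199/100*M)^2) ≤ M^2*r^2 :=
      mul_le_mul_of_nonneg_left hrr (sq_nonneg M)
    nlinarith [sq_nonneg (Q^2)]
  refine ⟨hP, ?_⟩
  have hfe : (fun x => Upsilon M Q x * V2 M Q x)
      = fun x => 4/x^2 - 10*M/x^3 + (4*M^2+2*Q^2)/x^4 + 2*M*Q^2/x^5 - 2*Q^4/x^6 := by
    funext x
    by_cases hx : x = 0
    · simp [hx, Upsilon, V2]
    · unfold Upsilon V2
      field_simp
      ring
  have hrne : r ≠ 0 := hr0.ne'
  have hd : HasDerivAt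
      (fun x : ℝ => 4/x^2 - 10*M/x^3 + (4*M^2+2*Q^2)/x^4 + 2*M*Q^2/x^5 - 2*Q^4/x^6)
      (-8/r^3 + 30*M/r^4 - (16*M^2+8*Q^2)/r^5 - 10*M*Q^2/r^6 + 12*Q^4/r^7) r := by
    have h2 := (hasDerivAt_const r (4:ℝ)).div (hasDerivAt_pow 2 r) (pow_ne_zero 2 hrne)
    have h3 := (hasDerivAt_const r (10*M)).div (hasDerivAt_pow 3 r) (pow_ne_zero 3 hrne)
    have h4 := (hasDerivAt_const r (4*M^2+2*Q^2)).div (hasDerivAt_pow 4 r) (pow_ne_zero 4 hrne)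
    have h5 := (hasDerivAt_const r (2*M*Q^2)).div (hasDerivAt_pow 5 r) (pow_ne_zero 5 hrne)
    have h6 := (hasDerivAt_const r (2*Q^4)).div (hasDerivAt_pow 6 r) (pow_ne_zero 6 hrne)
    have := (((h2.sub h3).add h4).add h5).sub h6
    convert this using 1
    · rfl
    · rfl
    · rfl
    field_simp
    ring
  rw [hfe, hd.deriv]
  have heq : 2*(r^2 - 3*M*r + 2*Q^2) / r^5
      - (1/2) * (-8/r^3 + 30*M/r^4 - (16*M^2+8*Q^2)/r^5 - 10*M*Q^2/r^6 + 12*Q^4/r^7)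
      = (6*r^4 - 21*M*r^3 + (8*M^2 + 8*Q^2)*r^2 + 5*M*Q^2*r - 6*Q^4) / r^7 := by
    field_simp
    ring
  rw [heq]
  exact div_nonpos_of_nonpos_of_nonneg hP (by positivity)
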